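/- arXiv:1607.04031 — 2 statements merged into one kernel-verified Lean document; each statement's English description precedes it below -/
import Mathlib

section
/- For 2 ≤ j ≤ α, the cardinalities satisfy #T^+_j = #T^-_j + #T^-_{j−1}. -/
/-- The set `T^+_j` (for `pos = true`) resp. `T^-_j` (for `pos = false`) of tuples
`(S_1,…,S_j)` (indexed here from `0`) of nonempty subsets `S_k ⊆ {0,…,n_k−1}`
satisfying P1, P3 (for `k < j`), with `n_j − 1 ∈ S_j` (resp. `n_j − 1 ∉ S_j`),
padded with `∅` beyond position `j`. -/
def Tpm (n : ℕ → ℕ) (j : ℕ) (pos : Bool) : Set (ℕ → Finset ℕ) :=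
  {S | (∀ k, j ≤ k → S k = ∅) ∧
       (∀ k, k < j → S k ⊆ Finset.range (n k)) ∧
       (∀ k, k < j → (S k).Nonempty) ∧
       (0 < j → (S 0).card = 1) ∧
       (∀ k, k + 1 < j → n k - 1 ∈ S k → 0 ∈ S (k + 1)) ∧
       (0 < j → (n (j - 1) - 1 ∈ S (j - 1) ↔ pos = true))}

lemma Tpm_finite (n : ℕ → ℕ) (j : ℕ) (pos : Bool) : (Tpm n j pos).Finite := by
  classical
  set M := (Finset.range j).sup n with hM
  have hsub : Tpm n j pos ⊆
      {S | ∀ k, S k ⊆ Finset.range M ∧ (j ≤ k → S k = ∅)} := by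
    intro S hS k
    constructor
    · by_cases hk : k < j
      · exact (hS.2.1 k hk).trans
          (Finset.range_subset_range.2 (Finset.le_sup (Finset.mem_range.2 hk)))
      · rw [hS.1 k (le_of_not_gt hk)]; exact Finset.empty_subset _
    · exact hS.1 k
  refine Set.Finite.subset ?_ hsub
  have hfin : Set.Finite {g : Fin j → Finset ℕ | ∀ k, g k ⊆ Finset.range M} := by
    have h := Set.Finite.pi (fun _ : Fin j => Set.finite_Iic (Finset.range M))
    refine h.subset ?_
    intro g hg
    intro i _
    exact hg i
  apply Set.Finite.of_finite_image (f := fun S (k : Fin j) => S k.val)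
  · refine hfin.subset ?_
    rintro _ ⟨S, hS, rfl⟩ k
    exact (hS k).1
  · intro S hS S' hS' h
    funext k
    by_cases hk : k < j
    · exact congrFun h ⟨k, hk⟩
    · rw [(hS k).2 (le_of_not_gt hk), (hS' k).2 (le_of_not_gt hk)]

/-- For `2 ≤ j ≤ α`, the cardinalities satisfy `#T^+_j = #T^-_j + #T^-_{j−1}`. -/
theorem Tpm_plus_eq_minus_add (α : ℕ) (hα : 1 ≤ α) (n : ℕ → ℕ)
    (hn : ∀ i, i < α → 2 ≤ n i) :
    ∀ j, 2 ≤ j → j ≤ α →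
      (Tpm n j true).ncard = (Tpm n j false).ncard + (Tpm n (j - 1) false).ncard := by
  classical
  intro j hj2 hjα
  obtain ⟨m, rfl⟩ : ∃ m, j = m + 2 := ⟨j - 2, by omega⟩
  have hred : m + 2 - 1 = m + 1 := rfl
  rw [hred]
  set top := n (m + 1) - 1 with htop
  have hn1 : 2 ≤ n (m + 1) := hn (m + 1) (by omega)
  have htop_pos : 0 < top := by omega
  have htop_lt : top < n (m + 1) := by omega
  -- The gluing map
  set F : (ℕ → Finset ℕ) → (ℕ → Finset ℕ) :=
    fun S => Function.update S (m + 1) (insert top (S (m + 1))) with hF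
  have hFval : ∀ S k, k ≠ m + 1 → F S k = S k := by
    intro S k hk
    simp [hF, Function.update_of_ne hk]
  have hFm : ∀ S, F S (m + 1) = insert top (S (m + 1)) := by
    intro S
    simp [hF]
  -- Image characterization
  have himg : Tpm n (m + 2) true = F '' (Tpm n (m + 2) false ∪ Tpm n (m + 1) false) := by
    apply Set.eq_of_subset_of_subset
    · -- surjectivity part
      intro T hT
      obtain ⟨h1, h2, h3, h4, h5, h6⟩ := hT
      have htopT : top ∈ T (m + 1) := (h6 (by omega)).2 rfl
      set S : ℕ → Finset ℕ := Function.update T (m + 1) ((T (m + 1)).erase top) with hS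
      have hSval : ∀ k, k ≠ m + 1 → S k = T k := by
        intro k hk; simp [hS, Function.update_of_ne hk]
      have hSm : S (m + 1) = (T (m + 1)).erase top := by simp [hS]
      have hFS : F S = T := by
        funext k
        by_cases hk : k = m + 1
        · subst hk
          rw [hFm, hSm, Finset.insert_erase htopT]
        · rw [hFval S k hk, hSval k hk]
      by_cases hne : ((T (m + 1)).erase top).Nonempty
      · -- S ∈ Tpm n (m+2) false
        refine ⟨S, Or.inl ⟨?_, ?_, ?_, ?_, ?_, ?_⟩, hFS⟩
        · intro k hk
          rw [hSval k (by omega)]; exact h1 k hk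
        · intro k hk
          by_cases hk' : k = m + 1
          · subst hk'
            rw [hSm]
            exact (Finset.erase_subset _ _).trans (h2 (m + 1) (by omega))
          · rw [hSval k hk']; exact h2 k hk
        · intro k hk
          by_cases hk' : k = m + 1
          · subst hk'; rw [hSm]; exact hne
          · rw [hSval k hk']; exact h3 k hk
        · intro _
          rw [hSval 0 (by omega)]; exact h4 (by omega)
        · intro k hk hmem
          have hk1 : k ≠ m + 1 := by omega
          rw [hSval k hk1] at hmem
          by_cases hk' : k + 1 = m + 1
          · have h0 : 0 ∈ T (k + 1) := h5 k hk hmem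
            rw [hk'] at h0 ⊢
            rw [hSm]
            exact Finset.mem_erase.2 ⟨by omega, h0⟩
          · rw [hSval (k + 1) hk']
            exact h5 k hk hmem
        · intro _
          rw [hred, hSm]
          simp [htop, Finset.mem_erase]
      · -- T (m+1) = {top}, so S ∈ Tpm n (m+1) false
        have hTm : T (m + 1) = {top} := by
          have he : (T (m + 1)).erase top = ∅ := Finset.not_nonempty_iff_eq_empty.1 hne
          have hie := Finset.insert_erase htopT
          rw [he] at hie
          simpa using hie.symm
        refine ⟨S, Or.inr ⟨?_, ?_, ?_, ?_, ?_, ?_⟩, hFS⟩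
        · intro k hk
          by_cases hk' : k = m + 1
          · subst hk'
            rw [hSm, hTm]; simp
          · rw [hSval k hk']
            exact h1 k (by omega)
        · intro k hk
          rw [hSval k (by omega)]
          exact h2 k (by omega)
        · intro k hk
          rw [hSval k (by omega)]
          exact h3 k (by omega)
        · intro _
          rw [hSval 0 (by omega)]; exact h4 (by omega)
        · intro k hk hmem
          rw [hSval k (by omega)] at hmem
          rw [hSval (k + 1) (by omega)]
          exact h5 k (by omega) hmem
        · intro _
          rw [show m + 1 - 1 = m from rfl]
          rw [hSval m (by omega)]
          simp only [Bool.false_eq_true, iff_false]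
          intro hmem
          have h0 : 0 ∈ T (m + 1) := h5 m (by omega) hmem
          rw [hTm] at h0
          simp at h0
          omega
    · -- forward part: F maps the union into Tpm n (m+2) true
      rintro _ ⟨S, hS, rfl⟩
      rcases hS with hS | hS
      · obtain ⟨h1, h2, h3, h4, h5, h6⟩ := hS
        refine ⟨?_, ?_, ?_, ?_, ?_, ?_⟩
        · intro k hk
          rw [hFval S k (by omega)]; exact h1 k hk
        · intro k hk
          by_cases hk' : k = m + 1
          · subst hk'
            rw [hFm]
            exact Finset.insert_subset (Finset.mem_range.2 htop_lt) (h2 (m + 1) (by omega))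
          · rw [hFval S k hk']; exact h2 k hk
        · intro k hk
          by_cases hk' : k = m + 1
          · subst hk'; rw [hFm]; exact Finset.insert_nonempty _ _
          · rw [hFval S k hk']; exact h3 k hk
        · intro _
          rw [hFval S 0 (by omega)]; exact h4 (by omega)
        · intro k hk hmem
          rw [hFval S k (by omega)] at hmem
          by_cases hk' : k + 1 = m + 1
          · rw [hk', hFm]
            have h0 : 0 ∈ S (k + 1) := h5 k hk hmem
            rw [hk'] at h0
            exact Finset.mem_insert_of_mem h0
          · rw [hFval S (k + 1) hk']
            exact h5 k hk hmem
        · intro _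
          rw [hred, hFm]
          simp [htop]
      · obtain ⟨h1, h2, h3, h4, h5, h6⟩ := hS
        have hSm1 : S (m + 1) = ∅ := h1 (m + 1) le_rfl
        have hFm1 : F S (m + 1) = {top} := by
          rw [hFm, hSm1]; rfl
        refine ⟨?_, ?_, ?_, ?_, ?_, ?_⟩
        · intro k hk
          rw [hFval S k (by omega)]
          exact h1 k (by omega)
        · intro k hk
          by_cases hk' : k = m + 1
          · subst hk'
            rw [hFm1]
            exact Finset.singleton_subset_iff.2 (Finset.mem_range.2 htop_lt)
          · rw [hFval S k hk']
            exact h2 k (by omega)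
        · intro k hk
          by_cases hk' : k = m + 1
          · subst hk'; rw [hFm1]; exact Finset.singleton_nonempty _
          · rw [hFval S k hk']
            exact h3 k (by omega)
        · intro _
          rw [hFval S 0 (by omega)]; exact h4 (by omega)
        · intro k hk hmem
          rw [hFval S k (by omega)] at hmem
          by_cases hk' : k + 1 = m + 1
          · exfalso
            have hkm : k = m := by omega
            have := (h6 (by omega))
            rw [show m + 1 - 1 = m from rfl] at this
            rw [hkm] at hmem
            simp at this
            exact this hmem
          · rw [hFval S (k + 1) hk']
            exact h5 k (by omega) hmem
        · intro _
          rw [hred, hFm1]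
          simp [htop]
  -- Injectivity of F on the union
  have hinj : Set.InjOn F (Tpm n (m + 2) false ∪ Tpm n (m + 1) false) := by
    have hnotmem : ∀ S, S ∈ Tpm n (m + 2) false ∪ Tpm n (m + 1) false →
        top ∉ S (m + 1) := by
      intro S hS
      rcases hS with hS | hS
      · have := hS.2.2.2.2.2 (by omega)
        rw [hred] at this
        simpa using this
      · rw [hS.1 (m + 1) le_rfl]
        simp
    intro S hS S' hS' h
    funext k
    by_cases hk : k = m + 1
    · subst hk
      have h1 : insert top (S (m + 1)) = insert top (S' (m + 1)) := by
        have := congrFun h (m + 1)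
        rwa [hFm, hFm] at this
      have e1 : (insert top (S (m + 1))).erase top = S (m + 1) :=
        Finset.erase_insert (hnotmem S hS)
      have e2 : (insert top (S' (m + 1))).erase top = S' (m + 1) :=
        Finset.erase_insert (hnotmem S' hS')
      rw [← e1, ← e2, h1]
    · have := congrFun h k
      rwa [hFval S k hk, hFval S' k hk] at this
  -- Disjointness
  have hdisj : Disjoint (Tpm n (m + 2) false) (Tpm n (m + 1) false) := by
    rw [Set.disjoint_left]
    intro S hS hS'
    have hne : (S (m + 1)).Nonempty := hS.2.2.1 (m + 1) (by omega)
    have he : S (m + 1) = ∅ := hS'.1 (m + 1) le_rfl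
    rw [he] at hne
    exact Finset.not_nonempty_empty hne
  rw [himg, Set.ncard_image_of_injOn hinj,
    Set.ncard_union_eq hdisj (Tpm_finite n (m + 2) false) (Tpm_finite n (m + 1) false)]
end

section
/- For every i ≥ 0, the coefficient of z in the polynomial s^-_i equals Σ_{c ⊨ i+1} (−1)^{|c|+i+1}·(3/2)^{Θ̃(c)}·{c}. -/
open MvPolynomial

/-- We work in `ℚ[x_1,x_2,…][y,z]`: polynomials in the two variables `y` (encoded `false`)
and `z` (encoded `true`) over the ring `ℚ[x_1,x_2,…]`.  `sPair j = (s^-_j, s^+_j)` where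
`s^-_0 = z`, `s^+_0 = 2y`, and for `j ≥ 1`,
`s^-_j = (x_j − 1)·s^-_{j−1} + (1/2)·x_j·s^+_{j−1}`,
`s^+_j = x_j·s^-_{j−1} + (1/2)·x_j·s^+_{j−1}`. -/
noncomputable def sPair : ℕ →
    MvPolynomial Bool (MvPolynomial ℕ ℚ) × MvPolynomial Bool (MvPolynomial ℕ ℚ)
  | 0 => (X true, 2 * X false)
  | j + 1 =>
    ((C (X (j + 1) : MvPolynomial ℕ ℚ) - 1) * (sPair j).1 +
        C ((MvPolynomial.C (1 / 2 : ℚ) * X (j + 1) : MvPolynomial ℕ ℚ)) * (sPair j).2,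
      C (X (j + 1) : MvPolynomial ℕ ℚ) * (sPair j).1 +
        C ((MvPolynomial.C (1 / 2 : ℚ) * X (j + 1) : MvPolynomial ℕ ℚ)) * (sPair j).2)

/-- `s^-_j`. -/
noncomputable def smP (j : ℕ) : MvPolynomial Bool (MvPolynomial ℕ ℚ) := (sPair j).1

/-- The monomial `{c} = x_{c_1}·x_{c_1+c_2}···x_{c_1+⋯+c_{ℓ−1}}` attached to a composition
with list of parts `l` (the empty product `1` when `ℓ = 1`). -/
noncomputable def curly (l : List ℕ) : MvPolynomial ℕ ℚ :=
  ∏ k ∈ Finset.range (l.length - 1), X ((l.take (k + 1)).sum)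

/-- `Θ̃(c) = #{ i : 2 ≤ i ≤ ℓ−1, c_i = 1 }`. -/
def thetaTilde (l : List ℕ) : ℕ :=
  (((l.drop 1).take (l.length - 2)).filter (· == 1)).length

/-! ### auxiliary definitions -/

def delta (l : List ℕ) : ℕ := if l.getLast? = some 1 ∧ 2 ≤ l.length then 1 else 0

noncomputable def fT (n : ℕ) (l : List ℕ) : MvPolynomial ℕ ℚ :=
  (-1 : MvPolynomial ℕ ℚ) ^ (l.length + n) *
    MvPolynomial.C ((3 / 2 : ℚ) ^ thetaTilde l) * curly l

noncomputable def gU (n : ℕ) (l : List ℕ) : MvPolynomial ℕ ℚ :=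
  (-1 : MvPolynomial ℕ ℚ) ^ (l.length + n) *
    MvPolynomial.C ((3 / 2 : ℚ) ^ (thetaTilde l + delta l)) * curly l

noncomputable def Tn (n : ℕ) : MvPolynomial ℕ ℚ := ∑ c : Composition n, fT n c.blocks
noncomputable def Un (n : ℕ) : MvPolynomial ℕ ℚ := ∑ c : Composition n, gU n c.blocks

def incL (l : List ℕ) : List ℕ := l.dropLast ++ [l.getLastD 0 + 1]

lemma incL_concat (m : List ℕ) (a : ℕ) : incL (m ++ [a]) = m ++ [a + 1] := by
  simp [incL, List.dropLast_concat, List.getLastD_concat]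

lemma blocks_ne {n : ℕ} (c : Composition (n + 1)) : c.blocks ≠ [] := by
  intro h
  have := c.blocks_sum
  rw [h] at this
  simp at this

lemma exists_concat {l : List ℕ} (hl : l ≠ []) : ∃ m a, l = m ++ [a] := by
  rcases l.eq_nil_or_concat with h | ⟨m, a, h⟩
  · exact absurd h hl
  · exact ⟨m, a, by simpa using h⟩

/-! ### list lemmas -/

lemma curly_concat (m : List ℕ) (a : ℕ) :
    curly (m ++ [a]) = ∏ k ∈ Finset.range m.length, X ((m.take (k + 1)).sum) := by
  unfold curly
  simp only [List.length_append, List.length_singleton, Nat.add_sub_cancel]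
  refine Finset.prod_congr rfl fun k hk => ?_
  rw [Finset.mem_range] at hk
  rw [List.take_append_of_le_length (by omega)]

lemma curly_concat_one (l : List ℕ) (hl : l ≠ []) :
    curly (l ++ [1]) = curly l * X l.sum := by
  obtain ⟨m, a, rfl⟩ := exists_concat hl
  rw [curly_concat (m ++ [a]) 1]
  simp only [List.length_append, List.length_singleton]
  rw [Finset.prod_range_succ]
  have h1 : (∏ k ∈ Finset.range m.length,
      (X (((m ++ [a]).take (k + 1)).sum) : MvPolynomial ℕ ℚ)) = curly (m ++ [a]) := by
    rw [curly_concat m a]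
    refine Finset.prod_congr rfl fun k hk => ?_
    rw [Finset.mem_range] at hk
    rw [List.take_append_of_le_length (by omega)]
  have h2 : ((m ++ [a]).take (m.length + 1)) = m ++ [a] := by
    rw [show m.length + 1 = (m ++ [a]).length by simp, List.take_length]
  rw [h1, h2]

lemma thetaTilde_concat (m : List ℕ) (a : ℕ) :
    thetaTilde (m ++ [a]) = ((m.drop 1).filter (· == 1)).length := by
  unfold thetaTilde
  rcases m with _ | ⟨x, m'⟩
  · simp
  · have h1 : ((x :: m') ++ [a]).drop 1 = m' ++ [a] := rfl
    have h2 : ((x :: m') ++ [a]).length - 2 = m'.length := by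
      simp only [List.length_append, List.length_cons, List.length_singleton,
        List.length_nil]
      omega
    rw [h1, h2, List.take_append_of_le_length (le_refl _), List.take_length]
    rfl

lemma delta_concat (m : List ℕ) (a : ℕ) :
    delta (m ++ [a]) = if a = 1 ∧ m ≠ [] then 1 else 0 := by
  have hlen : (2 ≤ (m ++ [a]).length) ↔ m ≠ [] := by
    rw [List.length_append, List.length_singleton]
    constructor
    · intro h hnil; subst hnil; simp at h
    · intro h; have := List.length_pos_iff.2 h; omega
  rw [delta, List.getLast?_concat]
  simp only [Option.some.injEq]
  by_cases ha : a = 1 <;> by_cases hm : m = [] <;> simp [ha, hm, hlen]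

lemma thetaTilde_concat_one (l : List ℕ) (hl : l ≠ []) :
    thetaTilde (l ++ [1]) = thetaTilde l + delta l := by
  obtain ⟨m, a, rfl⟩ := exists_concat hl
  rw [thetaTilde_concat (m ++ [a]) 1, thetaTilde_concat m a, delta_concat m a]
  rcases m with _ | ⟨x, m'⟩
  · simp
  · have h1 : ((x :: m') ++ [a]).drop 1 = m' ++ [a] := rfl
    rw [h1, List.filter_append]
    simp only [List.length_append, ne_eq, List.cons_ne_nil, not_false_iff, and_true,
      List.drop_one, List.tail_cons]
    by_cases ha : a = 1 <;> simp [ha, List.filter_singleton]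

lemma delta_concat_one (l : List ℕ) (hl : l ≠ []) : delta (l ++ [1]) = 1 := by
  rw [delta_concat]
  simp [hl]

/-! ### composition maps -/

def app1 {n : ℕ} (c : Composition n) : Composition (n + 1) where
  blocks := c.blocks ++ [1]
  blocks_pos := by
    intro i hi
    rw [List.mem_append] at hi
    rcases hi with hi | hi
    · exact c.blocks_pos hi
    · simp at hi; omega
  blocks_sum := by rw [List.sum_append, c.blocks_sum]; simp

def incLast {n : ℕ} (c : Composition (n + 1)) : Composition (n + 2) where
  blocks := incL c.blocks
  blocks_pos := by
    intro i hi
    rw [incL, List.mem_append] at hi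
    rcases hi with hi | hi
    · exact c.blocks_pos (List.dropLast_subset _ hi)
    · simp at hi; omega
  blocks_sum := by
    obtain ⟨m, a, h⟩ := exists_concat (blocks_ne c)
    have hs := c.blocks_sum
    rw [h] at hs ⊢
    rw [incL_concat, List.sum_append, List.sum_singleton]
    rw [List.sum_append, List.sum_singleton] at hs
    omega

lemma app1_blocks {n : ℕ} (c : Composition n) : (app1 c).blocks = c.blocks ++ [1] := rfl
lemma incLast_blocks {n : ℕ} (c : Composition (n + 1)) :
    (incLast c).blocks = incL c.blocks := rfl

lemma bij_split (n : ℕ) :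
    Function.Bijective
      (Sum.elim (app1 (n := n + 1)) (incLast (n := n)) :
        Composition (n + 1) ⊕ Composition (n + 1) → Composition (n + 2)) := by
  constructor
  · rintro (c | c) (d | d) h <;> simp only [Sum.elim_inl, Sum.elim_inr] at h
    · have hb : c.blocks ++ [1] = d.blocks ++ [1] := congrArg Composition.blocks h
      have := congrArg List.dropLast hb
      rw [List.dropLast_concat, List.dropLast_concat] at this
      exact congrArg Sum.inl (Composition.ext this)
    · exfalso
      have hb : c.blocks ++ [1] = incL d.blocks := congrArg Composition.blocks h
      obtain ⟨m, a, hm⟩ := exists_concat (blocks_ne d)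
      rw [hm, incL_concat] at hb
      have := congrArg (fun l => l.getLastD 0) hb
      simp only [List.getLastD_concat] at this
      have ha : a ∈ d.blocks := by rw [hm]; simp
      have := d.blocks_pos ha
      omega
    · exfalso
      have hb : incL c.blocks = d.blocks ++ [1] := congrArg Composition.blocks h
      obtain ⟨m, a, hm⟩ := exists_concat (blocks_ne c)
      rw [hm, incL_concat] at hb
      have := congrArg (fun l => l.getLastD 0) hb
      simp only [List.getLastD_concat] at this
      have ha : a ∈ c.blocks := by rw [hm]; simp
      have := c.blocks_pos ha
      omega
    · obtain ⟨m, a, hm⟩ := exists_concat (blocks_ne c)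
      obtain ⟨m', a', hm'⟩ := exists_concat (blocks_ne d)
      have hb : incL c.blocks = incL d.blocks := congrArg Composition.blocks h
      rw [hm, hm', incL_concat, incL_concat] at hb
      have h1 := congrArg List.dropLast hb
      rw [List.dropLast_concat, List.dropLast_concat] at h1
      have h2 := congrArg (fun l => l.getLastD 0) hb
      simp only [List.getLastD_concat] at h2
      refine congrArg Sum.inr (Composition.ext ?_)
      rw [hm, hm', h1, Nat.succ_injective h2]
  · intro c
    obtain ⟨m, a, hm⟩ := exists_concat (blocks_ne c)
    have hsum := c.blocks_sum
    rw [hm, List.sum_append, List.sum_singleton] at hsum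
    have hpos : 0 < a := c.blocks_pos (by rw [hm]; simp)
    match a, hpos, hm, hsum with
    | 1, _, hm, hsum =>
      refine ⟨Sum.inl ⟨m, ?_, by omega⟩, ?_⟩
      · intro i hi
        exact c.blocks_pos (by rw [hm]; exact List.mem_append_left _ hi)
      · refine (Composition.ext ?_).symm
        show c.blocks = m ++ [1]
        exact hm
    | (b + 2), _, hm, hsum =>
      refine ⟨Sum.inr ⟨m ++ [b + 1], ?_, ?_⟩, ?_⟩
      · intro i hi
        rw [List.mem_append] at hi
        rcases hi with hi | hi
        · exact c.blocks_pos (by rw [hm]; exact List.mem_append_left _ hi)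
        · simp at hi; omega
      · rw [List.sum_append, List.sum_singleton]; omega
      · refine (Composition.ext ?_).symm
        show c.blocks = incL (m ++ [b + 1])
        rw [incL_concat, hm]

lemma sum_split {M : Type*} [AddCommMonoid M] (n : ℕ) (h : List ℕ → M) :
    ∑ c : Composition (n + 2), h c.blocks =
      (∑ c : Composition (n + 1), h (c.blocks ++ [1])) +
        ∑ c : Composition (n + 1), h (incL c.blocks) := by
  rw [← Fintype.sum_bijective _ (bij_split n)
    (fun x => h ((Sum.elim (app1 (n := n + 1)) (incLast (n := n)) x).blocks))
    (fun c => h c.blocks) (fun x => rfl)]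
  rw [Fintype.sum_sum_type]
  rfl

/-! ### pointwise lemmas -/

lemma fT_concat_one (n : ℕ) (l : List ℕ) (hl : l ≠ []) (hs : l.sum = n + 1) :
    fT (n + 2) (l ++ [1]) = X (n + 1) * gU (n + 1) l := by
  unfold fT gU
  rw [curly_concat_one l hl, thetaTilde_concat_one l hl, hs, List.length_append,
    List.length_singleton,
    show l.length + 1 + (n + 2) = l.length + (n + 1) + 2 by omega, pow_add]
  ring

lemma fT_incL (n : ℕ) (l : List ℕ) (hl : l ≠ []) :
    fT (n + 2) (incL l) = -fT (n + 1) l := by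
  obtain ⟨m, a, rfl⟩ := exists_concat hl
  rw [incL_concat]
  unfold fT
  rw [curly_concat, curly_concat, thetaTilde_concat, thetaTilde_concat,
    List.length_append, List.length_append, List.length_singleton, List.length_singleton,
    show m.length + 1 + (n + 2) = m.length + 1 + (n + 1) + 1 by omega, pow_succ]
  ring

lemma gU_incL (n : ℕ) (l : List ℕ) (hl : l ≠ []) (hpos : ∀ i ∈ l, 0 < i) :
    gU (n + 2) (incL l) = -fT (n + 1) l := by
  obtain ⟨m, a, rfl⟩ := exists_concat hl
  have ha : 0 < a := hpos a (by simp)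
  rw [incL_concat]
  unfold fT gU
  have hd : delta (m ++ [a + 1]) = 0 := by
    rw [delta_concat, if_neg]
    rintro ⟨h1, -⟩
    omega
  rw [hd, curly_concat, curly_concat, thetaTilde_concat, thetaTilde_concat,
    List.length_append, List.length_append, List.length_singleton, List.length_singleton,
    Nat.add_zero,
    show m.length + 1 + (n + 2) = m.length + 1 + (n + 1) + 1 by omega, pow_succ]
  simp only [Nat.add_zero]
  ring

lemma gU_concat_one (n : ℕ) (l : List ℕ) (hl : l ≠ []) (hs : l.sum = n + 1) :
    gU (n + 2) (l ++ [1]) =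
      (MvPolynomial.C (3 / 2 : ℚ) * X (n + 1)) * gU (n + 1) l := by
  unfold gU
  rw [curly_concat_one l hl, thetaTilde_concat_one l hl, delta_concat_one l hl, hs,
    List.length_append, List.length_singleton,
    show l.length + 1 + (n + 2) = l.length + (n + 1) + 2 by omega,
    pow_add (-1 : MvPolynomial ℕ ℚ) (l.length + (n + 1)) 2, neg_one_sq,
    pow_succ (3 / 2 : ℚ) (thetaTilde l + delta l), map_mul]
  ring

/-! ### recurrences -/

lemma T_rec (n : ℕ) : Tn (n + 2) = -Tn (n + 1) + X (n + 1) * Un (n + 1) := by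
  rw [Tn, sum_split n (fT (n + 2))]
  rw [Finset.sum_congr rfl fun (c : Composition (n + 1)) _ =>
      fT_concat_one n c.blocks (blocks_ne c) c.blocks_sum,
    Finset.sum_congr rfl fun (c : Composition (n + 1)) _ => fT_incL n c.blocks (blocks_ne c),
    ← Finset.mul_sum, Finset.sum_neg_distrib]
  rw [Tn, Un]
  ring

lemma U_rec (n : ℕ) :
    Un (n + 2) = -Tn (n + 1) + (MvPolynomial.C (3 / 2 : ℚ) * X (n + 1)) * Un (n + 1) := by
  rw [Un, sum_split n (gU (n + 2))]
  rw [Finset.sum_congr rfl fun (c : Composition (n + 1)) _ =>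
      gU_concat_one n c.blocks (blocks_ne c) c.blocks_sum,
    Finset.sum_congr rfl fun (c : Composition (n + 1)) _ =>
      gU_incL n c.blocks (blocks_ne c) (fun i hi => c.blocks_pos hi),
    ← Finset.mul_sum, Finset.sum_neg_distrib]
  rw [Tn, Un]
  ring

/-! ### base case -/

lemma comp_one_blocks (c : Composition 1) : c.blocks = [1] := by
  have hs := c.blocks_sum
  rcases hb : c.blocks with _ | ⟨x, t⟩
  · rw [hb] at hs; simp at hs
  · rw [hb] at hs
    rcases t with _ | ⟨y, t'⟩
    · simp at hs; simp [hs]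
    · have hy : 0 < y := c.blocks_pos (by rw [hb]; simp)
      have hx : 0 < x := c.blocks_pos (by rw [hb]; simp)
      simp [List.sum_cons] at hs
      omega

lemma T_one : Tn 1 = 1 := by
  rw [Tn]
  have h : ∀ c : Composition 1, fT 1 c.blocks = fT 1 [1] := fun c => by
    rw [comp_one_blocks c]
  rw [Finset.sum_congr rfl fun c _ => h c, Finset.sum_const, Finset.card_univ,
    composition_card]
  simp [fT, thetaTilde, curly]

lemma U_one : Un 1 = 1 := by
  rw [Un]
  have h : ∀ c : Composition 1, gU 1 c.blocks = gU 1 [1] := fun c => by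
    rw [comp_one_blocks c]
  rw [Finset.sum_congr rfl fun c _ => h c, Finset.sum_const, Finset.card_univ,
    composition_card]
  simp [gU, thetaTilde, curly, delta]

/-! ### main induction -/

lemma key (j : ℕ) :
    MvPolynomial.coeff (Finsupp.single true 1) (sPair j).1 = Tn (j + 1) ∧
      MvPolynomial.coeff (Finsupp.single true 1) (sPair j).1 +
        MvPolynomial.C (1 / 2 : ℚ) * MvPolynomial.coeff (Finsupp.single true 1) (sPair j).2 =
          Un (j + 1) := by
  induction j with
  | zero =>
    have hX : MvPolynomial.coeff (Finsupp.single true 1)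
        (X true : MvPolynomial Bool (MvPolynomial ℕ ℚ)) = 1 := MvPolynomial.coeff_X_same true
    have hY : MvPolynomial.coeff (Finsupp.single true 1)
        (X false : MvPolynomial Bool (MvPolynomial ℕ ℚ)) = 0 := by
      simp [MvPolynomial.coeff_X', Finsupp.single_eq_single_iff]
    constructor
    · show MvPolynomial.coeff (Finsupp.single true 1) (X true) = Tn 1
      rw [T_one, hX]
    · show MvPolynomial.coeff (Finsupp.single true 1) (X true) +
        MvPolynomial.C (1 / 2 : ℚ) *
          MvPolynomial.coeff (Finsupp.single true 1) (2 * X false) = Un 1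
      rw [U_one, hX,
        show ((2 : MvPolynomial Bool (MvPolynomial ℕ ℚ)) * X false) = X false + X false by ring,
        MvPolynomial.coeff_add, hY]
      ring
  | succ j ih =>
    obtain ⟨ih1, ih2⟩ := ih
    set a := MvPolynomial.coeff (Finsupp.single true 1) (sPair j).1 with ha
    set b := MvPolynomial.coeff (Finsupp.single true 1) (sPair j).2 with hb
    have hc1 : MvPolynomial.coeff (Finsupp.single true 1) (sPair (j + 1)).1 =
        X (j + 1) * a - a + (MvPolynomial.C (1 / 2 : ℚ) * X (j + 1)) * b := by
      show MvPolynomial.coeff (Finsupp.single true 1)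
        ((C (X (j + 1) : MvPolynomial ℕ ℚ) - 1) * (sPair j).1 +
          C ((MvPolynomial.C (1 / 2 : ℚ) * X (j + 1) : MvPolynomial ℕ ℚ)) * (sPair j).2) = _
      rw [sub_mul, one_mul, MvPolynomial.coeff_add, MvPolynomial.coeff_sub,
        MvPolynomial.coeff_C_mul, MvPolynomial.coeff_C_mul]
    have hc2 : MvPolynomial.coeff (Finsupp.single true 1) (sPair (j + 1)).2 =
        X (j + 1) * a + (MvPolynomial.C (1 / 2 : ℚ) * X (j + 1)) * b := by
      show MvPolynomial.coeff (Finsupp.single true 1)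
        (C (X (j + 1) : MvPolynomial ℕ ℚ) * (sPair j).1 +
          C ((MvPolynomial.C (1 / 2 : ℚ) * X (j + 1) : MvPolynomial ℕ ℚ)) * (sPair j).2) = _
      rw [MvPolynomial.coeff_add, MvPolynomial.coeff_C_mul, MvPolynomial.coeff_C_mul]
    constructor
    · rw [hc1, T_rec j, ← ih1, ← ih2]
      ring
    · rw [hc1, hc2, U_rec j, ← ih1, ← ih2,
        show (MvPolynomial.C (3 / 2 : ℚ) : MvPolynomial ℕ ℚ) =
          1 + MvPolynomial.C (1 / 2 : ℚ) by rw [← MvPolynomial.C_1, ← MvPolynomial.C_add]; norm_num]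
      ring

/-- For every `i ≥ 0`, the coefficient of `z` in `s^-_i` equals
`Σ_{c ⊨ i+1} (−1)^{|c|+i+1}·(3/2)^{Θ̃(c)}·{c}`. -/
theorem coeff_z_smP (i : ℕ) :
    MvPolynomial.coeff (Finsupp.single true 1) (smP i) =
      ∑ c : Composition (i + 1),
        MvPolynomial.C ((-1 : ℚ) ^ (c.length + i + 1) * (3 / 2 : ℚ) ^ thetaTilde c.blocks) *
          curly c.blocks := by
  rw [show smP i = (sPair i).1 from rfl, (key i).1, Tn]
  refine Finset.sum_congr rfl fun c _ => ?_
  rw [fT, Composition.length]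
  simp only [map_mul, map_pow, map_neg, map_one]
  ring
end
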